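/- arXiv:1604.05825 — 2 statements merged into one kernel-verified Lean document; each statement's English description precedes it below -/
import Mathlib

section
/- Let π = (n_1,…,n_m) (m ≥ 2) be a partition of n and (i,j) ∈ P_m. If R is a block Jacobi annihilator from the class I_ij, then its transpose R^T also belongs to I_ij; in fact, R_ij(Û)^T = R_ij(Û^T) for every orthogonal matrix Û of order n_i+n_j. Moreover, for any 0 < ρ ≤ 1, if R ∈ I_ij^{UBC(ρ)}, then R^T ∈ I_ij^{UBC(ρ)}. -/
namespace BlockJacobi

open scoped BigOperators

attribute [local instance] Classical.propDecidable

noncomputable section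

/-- Offset (starting index) of block `r` for the partition `c`. -/
def off (c : ℕ → ℕ) (r : ℕ) : ℕ := ∑ k ∈ Finset.range r, c k

/-- `t` belongs to block `r`. -/
def inBlk (c : ℕ → ℕ) (r t : ℕ) : Prop := off c r ≤ t ∧ t < off c r + c r

/-- `s` and `t` belong to the same block (among the first `m` blocks). -/
def sameBlk (c : ℕ → ℕ) (m s t : ℕ) : Prop := ∃ r, r < m ∧ inBlk c r s ∧ inBlk c r t

/-- `t` belongs to the pivot zone: block `i` or block `j`. -/
def inPiv (c : ℕ → ℕ) (i j t : ℕ) : Prop := inBlk c i t ∨ inBlk c j t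

/-- `(c, m)` is a partition of `n` into `m` blocks (0-based blocks `0,…,m-1`). -/
def IsPartition (n m : ℕ) (c : ℕ → ℕ) : Prop :=
  2 ≤ m ∧ (∀ i < m, 1 ≤ c i) ∧ ∑ i ∈ Finset.range m, c i = n

/-- elementary block matrix with (0-based) pivot pair `(i,j)`. -/
def IsElem {n : ℕ} (c : ℕ → ℕ) (i j : ℕ) (U : Matrix (Fin n) (Fin n) ℝ) : Prop :=
  ∀ s t : Fin n, ¬(inPiv c i j (s : ℕ) ∧ inPiv c i j (t : ℕ)) →
    U s t = if s = t then 1 else 0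

/-- orthogonality. -/
def Orth {n : ℕ} (U : Matrix (Fin n) (Fin n) ℝ) : Prop := U.transpose * U = 1

/-- Euclidean norm of a vector. -/
def enorm {ι : Type*} [Fintype ι] (x : ι → ℝ) : ℝ := Real.sqrt (∑ i, x i ^ 2)

/-- smallest singular value of the `(r,r)` diagonal block of `U`. -/
def sigmaMinBlk {n : ℕ} (c : ℕ → ℕ) (r : ℕ) (U : Matrix (Fin n) (Fin n) ℝ) : ℝ :=
  sInf { v : ℝ | ∃ x : Fin n → ℝ,
    (∀ t : Fin n, ¬ inBlk c r (t : ℕ) → x t = 0) ∧ enorm x = 1 ∧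
    enorm (fun t : Fin n => if inBlk c r (t : ℕ) then U.mulVec x t else 0) = v }

/-- the constant `γ_{ij}` of the UBC class. -/
def gammaUBC (c : ℕ → ℕ) (i j : ℕ) : ℝ :=
  3 / Real.sqrt (((4 : ℝ) ^ c i + 6 * (c j : ℝ) - 1) * ((c j : ℝ) + 1))

/-- `U` is in the UBC class with pivot pair `(i,j)`: block structure given by `cs`,
`γ`-bound computed from the partition `cg`. -/
def IsUBC2 {n : ℕ} (cs cg : ℕ → ℕ) (ρ : ℝ) (i j : ℕ) (U : Matrix (Fin n) (Fin n) ℝ) : Prop :=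
  IsElem cs i j U ∧ Orth U ∧ sigmaMinBlk cs i U = sigmaMinBlk cs j U ∧
    ρ * gammaUBC cg i j ≤ sigmaMinBlk cs i U

/-- `U ∈ UBC_π(ρ)` with pivot pair `(i,j)`. -/
def IsUBC {n : ℕ} (c : ℕ → ℕ) (ρ : ℝ) (i j : ℕ) (U : Matrix (Fin n) (Fin n) ℝ) : Prop :=
  IsUBC2 c c ρ i j U

/-- the `(i,j)` pivot submatrix of `A` is diagonal. -/
def PivDiag {n : ℕ} (c : ℕ → ℕ) (i j : ℕ) (A : Matrix (Fin n) (Fin n) ℝ) : Prop :=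
  ∀ s t : Fin n, s ≠ t → inPiv c i j (s : ℕ) → inPiv c i j (t : ℕ) → A s t = 0

/-- square of the off-norm `S(A)`. -/
def offSq {n : ℕ} (A : Matrix (Fin n) (Fin n) ℝ) : ℝ :=
  ∑ s : Fin n, ∑ t : Fin n, if (s : ℕ) < (t : ℕ) then A s t ^ 2 else 0

/-- square of the off-norm of the `(i,j)` pivot submatrix of `A`. -/
def offSqPiv {n : ℕ} (c : ℕ → ℕ) (i j : ℕ) (A : Matrix (Fin n) (Fin n) ℝ) : ℝ :=
  ∑ s : Fin n, ∑ t : Fin n,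
    if (s : ℕ) < (t : ℕ) ∧ inPiv c i j (s : ℕ) ∧ inPiv c i j (t : ℕ) then A s t ^ 2 else 0

/-- Frobenius norm. -/
def frob {n : ℕ} (A : Matrix (Fin n) (Fin n) ℝ) : ℝ :=
  Real.sqrt (∑ s : Fin n, ∑ t : Fin n, A s t ^ 2)

/-- One sweep of the block Jacobi method along the pivot list `L`; block structure from
`cs`, UBC bound computed from the partition `cg`. -/
def Sweep2 {n : ℕ} (cs cg : ℕ → ℕ) (ρ : ℝ) (L : List (ℕ × ℕ))
    (A A' : Matrix (Fin n) (Fin n) ℝ) : Prop :=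
  ∃ B : ℕ → Matrix (Fin n) (Fin n) ℝ,
    B 0 = A ∧ B L.length = A' ∧
    ∀ (k : ℕ) (hk : k < L.length),
      ∃ U : Matrix (Fin n) (Fin n) ℝ,
        IsUBC2 cs cg ρ (L.get ⟨k, hk⟩).1 (L.get ⟨k, hk⟩).2 U ∧
        B (k + 1) = U.transpose * B k * U ∧
        PivDiag cs (L.get ⟨k, hk⟩).1 (L.get ⟨k, hk⟩).2 (B (k + 1))

/-- One sweep of the block Jacobi method with `UBC_π(ρ)` transformations. -/
def Sweep {n : ℕ} (c : ℕ → ℕ) (ρ : ℝ) (L : List (ℕ × ℕ))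
    (A A' : Matrix (Fin n) (Fin n) ℝ) : Prop :=
  Sweep2 c c ρ L A A'

/-- `L ∈ O(P_m)` (0-based pairs). -/
def SeqOn (m : ℕ) (L : List (ℕ × ℕ)) : Prop :=
  (∀ p ∈ L, p.1 < p.2 ∧ p.2 < m) ∧ ∀ i j : ℕ, i < j → j < m → (i, j) ∈ L

/-- `L ∈ O(S)` for `S ⊆ P_m`. -/
def SeqOnSet (S : Set (ℕ × ℕ)) (L : List (ℕ × ℕ)) : Prop :=
  (∀ p ∈ L, p ∈ S) ∧ ∀ p ∈ S, p ∈ L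

/-- the class `B_c^(m)` of column-wise orderings (0-based). -/
def memBc (m : ℕ) (L : List (ℕ × ℕ)) : Prop :=
  ∃ τ : ℕ → ℕ → ℕ,
    (∀ j, Set.BijOn (τ j) (Set.Iio j) (Set.Iio j)) ∧
    L = (List.range' 1 (m - 1)).flatMap fun j => (List.range j).map fun a => (τ j a, j)

/-- the class `B_r^(m)` of row-wise orderings (0-based). -/
def memBr (m : ℕ) (L : List (ℕ × ℕ)) : Prop :=
  ∃ σ : ℕ → ℕ → ℕ,
    (∀ i, Set.BijOn (σ i) (Set.Ico (i + 1) m) (Set.Ico (i + 1) m)) ∧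
    L = ((List.range (m - 1)).reverse).flatMap fun i =>
      (List.range' (i + 1) (m - 1 - i)).map fun b => (i, σ i b)

/-- the class `B_sp^(m)` of serial orderings with permutations. -/
def memBsp (m : ℕ) (L : List (ℕ × ℕ)) : Prop :=
  memBc m L ∨ memBc m L.reverse ∨ memBr m L ∨ memBr m L.reverse

/-- the quasi-cyclic class `B̄_c^(m)`. -/
def memBcQ (m : ℕ) (L : List (ℕ × ℕ)) : Prop :=
  ∃ (τ : ℕ → ℕ → ℕ) (E : ℕ → List (ℕ × ℕ)),
    (∀ j, Set.BijOn (τ j) (Set.Iio j) (Set.Iio j)) ∧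
    (∀ j, ∀ p ∈ E j, p.1 < p.2 ∧ p.2 ≤ j) ∧
    L = (List.range' 1 (m - 1)).flatMap fun j =>
      ((List.range j).map fun a => (τ j a, j)) ++ (if j = 1 then [] else E j)

/-- one admissible transposition (on lists of `α`'s carrying pairs via `pr`). -/
def AdjSwapG {α : Type*} (pr : α → ℕ × ℕ) (L L' : List α) : Prop :=
  ∃ (l₁ l₂ : List α) (a b : α),
    ({(pr a).1, (pr a).2} ∩ {(pr b).1, (pr b).2} : Set ℕ) = ∅ ∧
    L = l₁ ++ a :: b :: l₂ ∧ L' = l₁ ++ b :: a :: l₂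

/-- equivalence (finitely many admissible transpositions). -/
def EquivG {α : Type*} (pr : α → ℕ × ℕ) : List α → List α → Prop :=
  Relation.ReflTransGen (AdjSwapG pr)

/-- shift-equivalence. -/
def ShiftG {α : Type*} (L L' : List α) : Prop :=
  ∃ l₁ l₂ : List α, L = l₁ ++ l₂ ∧ L' = l₂ ++ l₁

/-- weak equivalence. -/
def WeakG {α : Type*} (pr : α → ℕ × ℕ) : List α → List α → Prop :=
  Relation.ReflTransGen fun X Y => EquivG pr X Y ∨ ShiftG X Y

/-- equivalence of pivot sequences. -/
def PEquivL : List (ℕ × ℕ) → List (ℕ × ℕ) → Prop := EquivG id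

/-- shift-equivalence of pivot sequences. -/
def ShiftEq : List (ℕ × ℕ) → List (ℕ × ℕ) → Prop := ShiftG

/-- weak equivalence of pivot sequences. -/
def WeakEq : List (ℕ × ℕ) → List (ℕ × ℕ) → Prop := WeakG id

/-- weak equivalence realized by a chain containing exactly `d` shift-equivalent
adjacent pairs (all other adjacent pairs being equivalent). -/
def WeakChainD (d : ℕ) (L L' : List (ℕ × ℕ)) : Prop :=
  ∃ (r : ℕ) (cs : ℕ → List (ℕ × ℕ)) (s : Finset ℕ),
    cs 0 = L ∧ cs r = L' ∧ s.card = d ∧ (∀ k ∈ s, k < r) ∧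
    ∀ k < r, if k ∈ s then ShiftEq (cs k) (cs (k + 1)) else PEquivL (cs k) (cs (k + 1))

/-- `q` is a permutation of `{0,…,m-1}`. -/
def IsPermOn (m : ℕ) (q : ℕ → ℕ) : Prop := Set.BijOn q (Set.Iio m) (Set.Iio m)

/-- `O(q)`: apply a permutation to all pairs of the sequence. -/
def pApply (q : ℕ → ℕ) (L : List (ℕ × ℕ)) : List (ℕ × ℕ) :=
  L.map fun p => if q p.1 < q p.2 then (q p.1, q p.2) else (q p.2, q p.1)

/-- `compSeq q t = q_t ∘ q_{t-1} ∘ ⋯ ∘ q_1`. -/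
def compSeq (q : ℕ → ℕ → ℕ) : ℕ → ℕ → ℕ
  | 0 => id
  | t + 1 => q (t + 1) ∘ compSeq q t

/-- the class `B_spg^(m)`. -/
def memBspg (m : ℕ) (L : List (ℕ × ℕ)) : Prop :=
  ∃ L' L'' : List (ℕ × ℕ), memBsp m L'' ∧
    ((∃ q, IsPermOn m q ∧ L' = pApply q L) ∧ PEquivL L' L'' ∨
      PEquivL L L' ∧ ∃ q, IsPermOn m q ∧ L'' = pApply q L')

/-- the class `B_sg^(m)` of generalized serial orderings. -/
def memBsg (m : ℕ) (L : List (ℕ × ℕ)) : Prop :=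
  ∃ L' L'' : List (ℕ × ℕ), memBsp m L'' ∧
    ((∃ q, IsPermOn m q ∧ L' = pApply q L) ∧ WeakEq L' L'' ∨
      WeakEq L L' ∧ ∃ q, IsPermOn m q ∧ L'' = pApply q L')

/-- index set of the entries of the off-diagonal blocks in the upper triangle;
it has cardinality `K`. -/
def OffI (n m : ℕ) (c : ℕ → ℕ) : Type :=
  { p : Fin n × Fin n // (p.1 : ℕ) < (p.2 : ℕ) ∧ ¬ sameBlk c m (p.1 : ℕ) (p.2 : ℕ) }

instance (n m : ℕ) (c : ℕ → ℕ) : Fintype (OffI n m c) := by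
  unfold OffI; exact Subtype.fintype _

instance (n m : ℕ) (c : ℕ → ℕ) : DecidableEq (OffI n m c) := Classical.decEq _

/-- `vec_{π,0}⁻¹` : the symmetric matrix with zero diagonal blocks built from a vector. -/
def symOf {n m : ℕ} {c : ℕ → ℕ} (a : OffI n m c → ℝ) : Matrix (Fin n) (Fin n) ℝ :=
  fun s t =>
    if h : (s : ℕ) < (t : ℕ) ∧ ¬ sameBlk c m (s : ℕ) (t : ℕ) then a ⟨(s, t), h⟩
    else if h' : (t : ℕ) < (s : ℕ) ∧ ¬ sameBlk c m (t : ℕ) (s : ℕ) then a ⟨(t, s), h'⟩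
    else 0

/-- `N_{ij}` : set the pivot submatrix to zero. -/
def nij {n : ℕ} (c : ℕ → ℕ) (i j : ℕ) (M : Matrix (Fin n) (Fin n) ℝ) :
    Matrix (Fin n) (Fin n) ℝ :=
  fun s t => if inPiv c i j (s : ℕ) ∧ inPiv c i j (t : ℕ) then 0 else M s t

/-- the block Jacobi annihilator `R_{ij}(Û)` (as a `K×K` matrix), parametrized by the
full elementary block matrix `U` with pivot pair `(i,j)` and pivot submatrix `Û`. -/
def annih (n m : ℕ) (c : ℕ → ℕ) (i j : ℕ) (U : Matrix (Fin n) (Fin n) ℝ) :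
    Matrix (OffI n m c) (OffI n m c) ℝ :=
  fun p q => nij c i j (U.transpose * symOf (Pi.single q (1 : ℝ)) * U) p.1.1 p.1.2

/-- the class `I_{ij}` of block Jacobi annihilators. -/
def Iij (n m : ℕ) (c : ℕ → ℕ) (i j : ℕ) : Set (Matrix (OffI n m c) (OffI n m c) ℝ) :=
  { R | ∃ U : Matrix (Fin n) (Fin n) ℝ, IsElem c i j U ∧ Orth U ∧ R = annih n m c i j U }

/-- the class `I_{ij}^{UBC(ρ)}`. -/
def IijUBC (n m : ℕ) (c : ℕ → ℕ) (ρ : ℝ) (i j : ℕ) :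
    Set (Matrix (OffI n m c) (OffI n m c) ℝ) :=
  { R | ∃ U : Matrix (Fin n) (Fin n) ℝ, IsUBC c ρ i j U ∧ R = annih n m c i j U }

/-- the class `J_O^{UBC_π(ρ)}` of block Jacobi operators. -/
def JopUBC (n m : ℕ) (c : ℕ → ℕ) (ρ : ℝ) (L : List (ℕ × ℕ)) :
    Set (Matrix (OffI n m c) (OffI n m c) ℝ) :=
  { J | ∃ R : ℕ → Matrix (OffI n m c) (OffI n m c) ℝ,
      (∀ (k : ℕ) (hk : k < L.length),
        R k ∈ IijUBC n m c ρ (L.get ⟨k, hk⟩).1 (L.get ⟨k, hk⟩).2) ∧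
      J = (((List.range L.length).reverse).map R).prod }

/-- spectral norm (operator 2-norm). -/
def specNorm {ι : Type*} [Fintype ι] (M : Matrix ι ι ℝ) : ℝ :=
  sSup { v : ℝ | ∃ x : ι → ℝ, enorm x = 1 ∧ enorm (M.mulVec x) = v }

/-- spectral radius. -/
def specRad {ι : Type*} [Fintype ι] (M : Matrix ι ι ℝ) : ℝ :=
  sSup { v : ℝ | ∃ (μ : ℂ) (x : ι → ℂ), x ≠ 0 ∧
    (M.map (fun r : ℝ => (r : ℂ))).mulVec x = μ • x ∧ v = ‖μ‖ }

/-- product `R_{T-1} ⋯ R_1 R_0` of a decorated pivot list. -/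
def prodD {n m : ℕ} {c : ℕ → ℕ}
    (L : List ((ℕ × ℕ) × Matrix (OffI n m c) (OffI n m c) ℝ)) :
    Matrix (OffI n m c) (OffI n m c) ℝ :=
  ((L.map Prod.snd).reverse).prod

/-- plane (Givens) rotation in the `(i,j)` coordinate plane. -/
def rotM (n : ℕ) (i j : ℕ) (φ : ℝ) : Matrix (Fin n) (Fin n) ℝ :=
  fun s t =>
    if (s : ℕ) = i ∧ (t : ℕ) = i then Real.cos φ
    else if (s : ℕ) = j ∧ (t : ℕ) = j then Real.cos φ
    else if (s : ℕ) = i ∧ (t : ℕ) = j then - Real.sin φ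
    else if (s : ℕ) = j ∧ (t : ℕ) = i then Real.sin φ
    else if s = t then 1 else 0

/-- One sweep of the scalar (element-wise) cyclic Jacobi method with rotation
angles in `[-π/4, π/4]`. -/
def ScalarSweep {n : ℕ} (L : List (ℕ × ℕ)) (A A' : Matrix (Fin n) (Fin n) ℝ) : Prop :=
  ∃ (B : ℕ → Matrix (Fin n) (Fin n) ℝ) (φ : ℕ → ℝ),
    B 0 = A ∧ B L.length = A' ∧
    ∀ (k : ℕ) (hk : k < L.length),
      |φ k| ≤ Real.pi / 4 ∧
      B (k + 1) =
        (rotM n (L.get ⟨k, hk⟩).1 (L.get ⟨k, hk⟩).2 (φ k)).transpose * B k *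
          rotM n (L.get ⟨k, hk⟩).1 (L.get ⟨k, hk⟩).2 (φ k) ∧
      ∀ s t : Fin n, (s : ℕ) = (L.get ⟨k, hk⟩).1 → (t : ℕ) = (L.get ⟨k, hk⟩).2 →
        B (k + 1) s t = 0

/-- `k` concatenated copies of a list. -/
def iterList {α : Type*} : ℕ → List α → List α
  | 0, _ => []
  | k + 1, L => L ++ iterList k L


/-! ### Auxiliary lemmas -/

section Aux15

lemma enorm_nonneg' {ι : Type*} [Fintype ι] (x : ι → ℝ) : 0 ≤ enorm x :=
  Real.sqrt_nonneg _

lemma enorm_sq {ι : Type*} [Fintype ι] (x : ι → ℝ) : enorm x ^ 2 = ∑ i, x i ^ 2 :=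
  Real.sq_sqrt (Finset.sum_nonneg fun i _ => sq_nonneg _)

lemma enorm_eq_zero {ι : Type*} [Fintype ι] {x : ι → ℝ} (h : enorm x = 0) : x = 0 := by
  have h2 : ∑ i, x i ^ 2 = 0 := by
    rw [← enorm_sq x, h]; ring
  funext i
  have := (Finset.sum_eq_zero_iff_of_nonneg (fun i _ => sq_nonneg (x i))).mp h2 i
    (Finset.mem_univ i)
  exact pow_eq_zero_iff (by norm_num) |>.mp this

lemma enorm_smul' {ι : Type*} [Fintype ι] (s : ℝ) (x : ι → ℝ) :
    enorm (s • x) = |s| * enorm x := by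
  unfold enorm
  rw [← Real.sqrt_sq_eq_abs, ← Real.sqrt_mul (sq_nonneg s), Finset.mul_sum]
  congr 1
  refine Finset.sum_congr rfl fun i _ => ?_
  simp [mul_pow]

end Aux15

section Sigma

variable {n : ℕ} (c : ℕ → ℕ) (r : ℕ)

/-- projection to block `r` of `A.mulVec x`. -/
def prj (A : Matrix (Fin n) (Fin n) ℝ) (x : Fin n → ℝ) : Fin n → ℝ :=
  fun t => if inBlk c r (t : ℕ) then A.mulVec x t else 0

lemma prj_smul (A : Matrix (Fin n) (Fin n) ℝ) (s : ℝ) (x : Fin n → ℝ) :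
    prj c r A (s • x) = s • prj c r A x := by
  funext t
  simp only [prj, Matrix.mulVec_smul, Pi.smul_apply, smul_eq_mul]
  split <;> simp

/-- the set whose infimum is `sigmaMinBlk`. -/
def sigSet (A : Matrix (Fin n) (Fin n) ℝ) : Set ℝ :=
  { v : ℝ | ∃ x : Fin n → ℝ,
    (∀ t : Fin n, ¬ inBlk c r (t : ℕ) → x t = 0) ∧ enorm x = 1 ∧
    enorm (prj c r A x) = v }

lemma sigmaMinBlk_eq (A : Matrix (Fin n) (Fin n) ℝ) :
    sigmaMinBlk c r A = sInf (sigSet c r A) := rfl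

lemma sigSet_bddBelow (A : Matrix (Fin n) (Fin n) ℝ) : BddBelow (sigSet c r A) := by
  refine ⟨0, fun v hv => ?_⟩
  obtain ⟨x, -, -, hx⟩ := hv
  rw [← hx]; exact enorm_nonneg' _

lemma sigSet_nonneg (A : Matrix (Fin n) (Fin n) ℝ) : 0 ≤ sInf (sigSet c r A) := by
  rcases Set.eq_empty_or_nonempty (sigSet c r A) with h | h
  · rw [h, Real.sInf_empty]
  · exact le_csInf h fun v hv => by
      obtain ⟨x, -, -, hx⟩ := hv; rw [← hx]; exact enorm_nonneg' _

/-- supported vectors. -/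
def blkSub : Submodule ℝ (Fin n → ℝ) where
  carrier := {y | ∀ t : Fin n, ¬ inBlk c r (t : ℕ) → y t = 0}
  add_mem' := fun {a b} ha hb t ht => by simp [ha t ht, hb t ht]
  zero_mem' := fun t _ => rfl
  smul_mem' := fun s y hy t ht => by simp [hy t ht]

/-- compressed block map as an endomorphism of `blkSub`. -/
def Tmap (A : Matrix (Fin n) (Fin n) ℝ) : blkSub (n := n) c r →ₗ[ℝ] blkSub (n := n) c r where
  toFun y := ⟨prj c r A y.1, fun t ht => if_neg ht⟩
  map_add' y z := by
    apply Subtype.ext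
    funext t
    simp only [prj, Submodule.coe_add, Matrix.mulVec_add, Pi.add_apply]
    split <;> simp
  map_smul' s y := by
    apply Subtype.ext
    funext t
    simp only [prj, SetLike.val_smul, Matrix.mulVec_smul, Pi.smul_apply, smul_eq_mul,
      RingHom.id_apply]
    split <;> simp

/-- the key dot-product identity. -/
lemma dot_identity (A : Matrix (Fin n) (Fin n) ℝ) (x y : Fin n → ℝ)
    (hx : ∀ t : Fin n, ¬ inBlk c r (t : ℕ) → x t = 0)
    (hy : ∀ t : Fin n, ¬ inBlk c r (t : ℕ) → y t = 0) :
    ∑ t, y t * prj c r A x t = ∑ s, prj c r A.transpose y s * x s := by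
  have h1 : ∑ t, y t * prj c r A x t = ∑ t, y t * A.mulVec x t := by
    refine Finset.sum_congr rfl fun t _ => ?_
    by_cases h : inBlk c r (t : ℕ)
    · simp [prj, h]
    · simp [prj, h, hy t h]
  have h2 : ∑ s, prj c r A.transpose y s * x s = ∑ s, A.transpose.mulVec y s * x s := by
    refine Finset.sum_congr rfl fun s _ => ?_
    by_cases h : inBlk c r (s : ℕ)
    · simp [prj, h]
    · simp [prj, h, hx s h]
  rw [h1, h2]
  simp only [Matrix.mulVec, dotProduct, Matrix.transpose_apply, Finset.mul_sum,
    Finset.sum_mul]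
  rw [Finset.sum_comm]
  exact Finset.sum_congr rfl fun t _ => Finset.sum_congr rfl fun s _ => by ring

lemma sigma_transpose_le (A : Matrix (Fin n) (Fin n) ℝ) :
    sigmaMinBlk c r A.transpose ≤ sigmaMinBlk c r A := by
  rw [sigmaMinBlk_eq, sigmaMinBlk_eq]
  rcases Set.eq_empty_or_nonempty (sigSet c r A) with hemp | hne
  · have hemp' : sigSet c r A.transpose = ∅ := by
      rw [Set.eq_empty_iff_forall_notMem]
      rintro v ⟨x, hsupp, hx1, -⟩
      exact Set.eq_empty_iff_forall_notMem.mp hemp (enorm (prj c r A x))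
        ⟨x, hsupp, hx1, rfl⟩
    rw [hemp, hemp']
  refine le_csInf hne ?_
  rintro v ⟨x, hsupp, hx1, hv⟩
  set σ := sInf (sigSet c r A.transpose) with hσdef
  have hσ0 : 0 ≤ σ := sigSet_nonneg c r _
  have hv0 : 0 ≤ v := by rw [← hv]; exact enorm_nonneg' _
  rcases eq_or_lt_of_le hσ0 with h0 | hσpos
  · linarith
  -- σ > 0 : the compressed transpose map is injective, hence surjective
  have hbdd := sigSet_bddBelow c r A.transpose
  have key : ∀ y : Fin n → ℝ, (∀ t : Fin n, ¬ inBlk c r (t : ℕ) → y t = 0) → y ≠ 0 →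
      σ * enorm y ≤ enorm (prj c r A.transpose y) := by
    intro y hysupp hy0
    have hey : 0 < enorm y := by
      rcases lt_or_eq_of_le (enorm_nonneg' y) with h | h
      · exact h
      · exact absurd (enorm_eq_zero h.symm) hy0
    have hmem : enorm (prj c r A.transpose ((enorm y)⁻¹ • y)) ∈ sigSet c r A.transpose := by
      refine ⟨(enorm y)⁻¹ • y, fun t ht => by simp [hysupp t ht], ?_, rfl⟩
      rw [enorm_smul', abs_of_pos (by positivity)]
      field_simp
    have := csInf_le hbdd hmem
    rw [prj_smul, enorm_smul', abs_of_pos (by positivity)] at this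
    calc σ * enorm y ≤ (enorm y)⁻¹ * enorm (prj c r A.transpose y) * enorm y := by
          exact mul_le_mul_of_nonneg_right this (le_of_lt hey)
      _ = enorm (prj c r A.transpose y) := by field_simp
  -- injectivity of Tmap c r A.transpose
  have hinj : Function.Injective (Tmap c r A.transpose) := by
    rw [← LinearMap.ker_eq_bot, Submodule.eq_bot_iff]
    intro y hy
    by_contra hy0
    have hy0' : (y : Fin n → ℝ) ≠ 0 := fun h => hy0 (Subtype.ext h)
    have hker : prj c r A.transpose y.1 = 0 := by
      have : (Tmap c r A.transpose y : Fin n → ℝ) = 0 := by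
        rw [LinearMap.mem_ker] at hy; rw [hy]; rfl
      exact this
    have := key y.1 y.2 hy0'
    rw [hker] at this
    have h0 : enorm (0 : Fin n → ℝ) = 0 := by
      simp [enorm]
    rw [h0] at this
    nlinarith [this, mul_pos hσpos (by
      rcases lt_or_eq_of_le (enorm_nonneg' (y : Fin n → ℝ)) with h | h
      · exact h
      · exact absurd (enorm_eq_zero h.symm) hy0')]
  have hsurj : Function.Surjective (Tmap c r A.transpose) :=
    LinearMap.injective_iff_surjective.mp hinj
  -- get preimage of x
  obtain ⟨y, hy⟩ := hsurj ⟨x, hsupp⟩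
  have hyx : prj c r A.transpose y.1 = x := congrArg Subtype.val hy
  have hx0 : x ≠ 0 := fun h => by rw [h] at hx1; simp [enorm] at hx1
  have hy0 : (y : Fin n → ℝ) ≠ 0 := by
    intro h
    apply hx0
    rw [← hyx, h]
    funext t; simp [prj]
  have hey : 0 < enorm (y : Fin n → ℝ) := by
    rcases lt_or_eq_of_le (enorm_nonneg' (y : Fin n → ℝ)) with h | h
    · exact h
    · exact absurd (enorm_eq_zero h.symm) hy0
  -- σ * ‖y‖ ≤ ‖T y‖ = ‖x‖ = 1
  have h1 : σ * enorm (y : Fin n → ℝ) ≤ 1 := by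
    have := key y.1 y.2 hy0
    rw [hyx, hx1] at this
    exact this
  -- Cauchy–Schwarz : 1 = ⟪y, prj A x⟫ ≤ ‖y‖ * v
  have hdot : ∑ t, y.1 t * prj c r A x t = 1 := by
    rw [dot_identity c r A x y.1 hsupp y.2, hyx]
    have hsum : ∑ i, x i ^ 2 = 1 := by rw [← enorm_sq x, hx1]; norm_num
    rw [← hsum]
    exact Finset.sum_congr rfl fun s _ => (pow_two (x s)).symm
  have hcs : 1 ≤ (enorm (y : Fin n → ℝ))^2 * v^2 := by
    have := Finset.sum_mul_sq_le_sq_mul_sq Finset.univ y.1 (prj c r A x)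
    rw [hdot] at this
    rw [enorm_sq, ← hv, enorm_sq]
    simpa using this
  have hev : 1 ≤ enorm (y : Fin n → ℝ) * v := by
    nlinarith [mul_nonneg hey.le hv0, hcs]
  nlinarith [h1, hev, hey]

lemma sigma_transpose (A : Matrix (Fin n) (Fin n) ℝ) :
    sigmaMinBlk c r A.transpose = sigmaMinBlk c r A := by
  refine le_antisymm (sigma_transpose_le c r A) ?_
  have := sigma_transpose_le c r A.transpose
  rwa [Matrix.transpose_transpose] at this

end Sigma

section Annih

variable {n m : ℕ} {c : ℕ → ℕ} {i j : ℕ}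

/-- single-entry matrix. -/
def Emat {n : ℕ} (a b : Fin n) : Matrix (Fin n) (Fin n) ℝ :=
  fun s t => if s = a ∧ t = b then 1 else 0

lemma symOf_single (q : OffI n m c) :
    symOf (Pi.single q (1 : ℝ)) = Emat q.1.1 q.1.2 + Emat q.1.2 q.1.1 := by
  obtain ⟨⟨q1, q2⟩, hq⟩ := q
  funext s t
  simp only [symOf, Matrix.add_apply, Emat]
  have hq1 : (q1 : ℕ) < (q2 : ℕ) := hq.1
  have hne : (q1 : ℕ) ≠ (q2 : ℕ) := Nat.ne_of_lt hq1
  by_cases e1 : s = q1 ∧ t = q2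
  · have hc : (s : ℕ) < (t : ℕ) ∧ ¬ sameBlk c m (s : ℕ) (t : ℕ) := by
      rw [e1.1, e1.2]; exact hq
    erw [dif_pos hc, Pi.single_apply, if_pos (Subtype.ext (show (s, t) = (q1, q2) by rw [e1.1, e1.2])),
      if_pos e1, if_neg, add_zero]
    rintro ⟨h1, h2⟩
    exact hne (by rw [← e1.1, h1])
  · by_cases e2 : s = q2 ∧ t = q1
    · have hc1 : ¬ ((s : ℕ) < (t : ℕ) ∧ ¬ sameBlk c m (s : ℕ) (t : ℕ)) := by
        rintro ⟨hh, -⟩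
        rw [e2.1, e2.2] at hh
        exact absurd hq1 (by omega)
      have hc2 : (t : ℕ) < (s : ℕ) ∧ ¬ sameBlk c m (t : ℕ) (s : ℕ) := by
        rw [e2.1, e2.2]; exact hq
      erw [dif_neg hc1, dif_pos hc2, Pi.single_apply,
        if_pos (Subtype.ext (show (t, s) = (q1, q2) by rw [e2.1, e2.2])), if_neg e1, if_pos e2, zero_add]
    · rw [if_neg e1, if_neg e2, add_zero]
      by_cases h : (s : ℕ) < (t : ℕ) ∧ ¬ sameBlk c m (s : ℕ) (t : ℕ)
      · erw [dif_pos h, Pi.single_apply, if_neg]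
        intro hh
        have hv := congrArg (fun z : OffI n m c => z.1) hh
        exact e1 ⟨congrArg Prod.fst hv, congrArg Prod.snd hv⟩
      · rw [dif_neg h]
        by_cases h' : (t : ℕ) < (s : ℕ) ∧ ¬ sameBlk c m (t : ℕ) (s : ℕ)
        · erw [dif_pos h', Pi.single_apply, if_neg]
          intro hh
          have hv := congrArg (fun z : OffI n m c => z.1) hh
          exact e2 ⟨congrArg Prod.snd hv, congrArg Prod.fst hv⟩
        · rw [dif_neg h']

lemma triple_E (U : Matrix (Fin n) (Fin n) ℝ) (a b s t : Fin n) :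
    (U.transpose * Emat a b * U) s t = U a s * U b t := by
  rw [Matrix.mul_apply]
  have hrow : ∀ u : Fin n, (U.transpose * Emat a b) s u = if u = b then U a s else 0 := by
    intro u
    rw [Matrix.mul_apply]
    simp only [Matrix.transpose_apply, Emat, mul_ite, mul_one, mul_zero]
    by_cases hub : u = b
    · subst hub
      simp only [and_true]
      rw [Finset.sum_ite_eq' Finset.univ a (fun w => U w s)]
      simp
    · simp [hub]
  calc ∑ u, (U.transpose * Emat a b) s u * U u t
      = ∑ u, (if u = b then U a s else 0) * U u t := by
        exact Finset.sum_congr rfl fun u _ => by rw [hrow u]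
    _ = ∑ u, (if u = b then U a s * U u t else 0) := by
        exact Finset.sum_congr rfl fun u _ => by split <;> simp
    _ = U a s * U b t := by
        rw [Finset.sum_ite_eq' Finset.univ b (fun u => U a s * U u t)]
        simp

lemma triple_single (U : Matrix (Fin n) (Fin n) ℝ) (q : OffI n m c) (s t : Fin n) :
    (U.transpose * symOf (Pi.single q (1 : ℝ)) * U) s t
      = U q.1.1 s * U q.1.2 t + U q.1.2 s * U q.1.1 t := by
  rw [symOf_single, Matrix.mul_add, Matrix.add_mul, Matrix.add_apply, triple_E, triple_E]

/-- entries of an elementary block matrix die across the pivot boundary. -/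
lemma elem_zero {U : Matrix (Fin n) (Fin n) ℝ} (hU : IsElem c i j U) {s t : Fin n}
    (hs : inPiv c i j (s : ℕ)) (ht : ¬ inPiv c i j (t : ℕ)) :
    U s t = 0 ∧ U t s = 0 := by
  have hst : s ≠ t := by rintro rfl; exact ht hs
  constructor
  · rw [hU s t (fun hh => ht hh.2), if_neg hst]
  · rw [hU t s (fun hh => ht hh.1), if_neg hst.symm]

lemma annih_transpose (U : Matrix (Fin n) (Fin n) ℝ) (hU : IsElem c i j U) :
    (annih n m c i j U).transpose = annih n m c i j U.transpose := by
  ext p q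
  obtain ⟨⟨p1, p2⟩, hp⟩ := p
  obtain ⟨⟨q1, q2⟩, hq⟩ := q
  erw [Matrix.transpose_apply]
  simp only [Matrix.transpose_apply, annih, nij]
  erw [triple_single U ⟨(p1, p2), hp⟩, triple_single U.transpose ⟨(q1, q2), hq⟩]
  simp only [Matrix.transpose_apply]
  by_cases hPp : inPiv c i j (p1 : ℕ) ∧ inPiv c i j (p2 : ℕ) <;>
    by_cases hPq : inPiv c i j (q1 : ℕ) ∧ inPiv c i j (q2 : ℕ)
  · rw [if_pos hPq, if_pos hPp]
  · -- p in pivot, q not : value is zero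
    rw [if_neg hPq, if_pos hPp]
    rcases not_and_or.mp hPq with hq1 | hq2
    · rw [(elem_zero hU hPp.1 hq1).1, (elem_zero hU hPp.2 hq1).1]; ring
    · rw [(elem_zero hU hPp.2 hq2).1, (elem_zero hU hPp.1 hq2).1]; ring
  · rw [if_pos hPq, if_neg hPp]
    rcases not_and_or.mp hPp with hp1 | hp2
    · rw [(elem_zero hU hPq.1 hp1).2, (elem_zero hU hPq.2 hp1).2]; ring
    · rw [(elem_zero hU hPq.2 hp2).2, (elem_zero hU hPq.1 hp2).2]; ring
  · rw [if_neg hPq, if_neg hPp]; ring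

end Annih

lemma isElem_transpose {n : ℕ} {c : ℕ → ℕ} {i j : ℕ}
    {U : Matrix (Fin n) (Fin n) ℝ} (hU : IsElem c i j U) : IsElem c i j U.transpose := by
  intro s t hst
  have := hU t s (fun hh => hst ⟨hh.2, hh.1⟩)
  rw [Matrix.transpose_apply, this]
  by_cases h : s = t
  · subst h; simp
  · rw [if_neg h, if_neg (Ne.symm h)]

lemma orth_transpose {n : ℕ} {U : Matrix (Fin n) (Fin n) ℝ} (hU : Orth U) :
    Orth U.transpose := by
  unfold Orth at *
  rw [Matrix.transpose_transpose]
  exact mul_eq_one_comm.mp hU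

/-- Corollary 2.13: transposes of block Jacobi annihilators:
`R_{ij}(Û)ᵀ = R_{ij}(Ûᵀ)`, the class `I_{ij}` is closed under transposition,
and so is `I_{ij}^{UBC(ρ)}`. -/
theorem statement15 (n m : ℕ) (c : ℕ → ℕ) (hpart : IsPartition n m c)
    (i j : ℕ) (hij : i < j) (hj : j < m) (ρ : ℝ) (hρ0 : 0 < ρ) (hρ1 : ρ ≤ 1) :
    (∀ U : Matrix (Fin n) (Fin n) ℝ, IsElem c i j U → Orth U →
      (annih n m c i j U).transpose = annih n m c i j U.transpose) ∧
    (∀ R ∈ Iij n m c i j, R.transpose ∈ Iij n m c i j) ∧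
    (∀ R ∈ IijUBC n m c ρ i j, R.transpose ∈ IijUBC n m c ρ i j) := by
  refine ⟨fun U hE _ => annih_transpose U hE, ?_, ?_⟩
  · rintro R ⟨U, hE, hO, rfl⟩
    exact ⟨U.transpose, isElem_transpose hE, orth_transpose hO, annih_transpose U hE⟩
  · rintro R ⟨U, ⟨hE, hO, hsig, hbound⟩, rfl⟩
    refine ⟨U.transpose, ⟨isElem_transpose hE, orth_transpose hO, ?_, ?_⟩,
      annih_transpose U hE⟩
    · rw [sigma_transpose c i U, sigma_transpose c j U]; exact hsig
    · rw [sigma_transpose c i U]; exact hbound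
end
end BlockJacobi
end

section
/- Let π = (n_1,…,n_m) (m ≥ 2) be a partition of n and O, O' ∈ O(P_m) with O' weak equivalent to O. Let J_O = R_{i_{T−1}j_{T−1}}···R_{i_1j_1}R_{i_0j_0} ∈ J_O be a block Jacobi operator and let J_{O'} be the product of the same block Jacobi annihilators arranged according to O' (i.e., J_{O'} is obtained from the product defining J_O by following the chain connecting O to O': interchanging two adjacent factors whenever the corresponding adjacent pairs are interchanged by an admissible transposition, and cyclically permuting the factors whenever a shift equivalence is applied). Then spr(J_O) = spr(J_{O'}), where spr denotes the spectral radius. Moreover, if O ~ O' (equivalent, connected by admissible transpositions only), then J_O = J_{O'}. -/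
namespace BlockJacobi

open scoped BigOperators

attribute [local instance] Classical.propDecidable

noncomputable section

section AuxProof

variable {n m : ℕ} {c : ℕ → ℕ}

lemma off_le_off (c : ℕ → ℕ) {r r' : ℕ} (h : r ≤ r') : off c r ≤ off c r' :=
  Finset.sum_le_sum_of_subset (Finset.range_subset_range.2 h)

lemma off_succ (c : ℕ → ℕ) (r : ℕ) : off c (r + 1) = off c r + c r :=
  Finset.sum_range_succ _ _

lemma blk_unique {r r' t : ℕ} (h : inBlk c r t) (h' : inBlk c r' t) : r = r' := by
  by_contra hne
  rcases Nat.lt_or_ge r r' with hlt | hge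
  · have h1 : off c (r + 1) ≤ off c r' := off_le_off c hlt
    rw [off_succ] at h1
    have h2 := h.2; have h3 := h'.1
    omega
  · have hlt : r' < r := lt_of_le_of_ne hge (fun e => hne e.symm)
    have h1 : off c (r' + 1) ≤ off c r := off_le_off c hlt
    rw [off_succ] at h1
    have h2 := h'.2; have h3 := h.1
    omega

lemma exists_blk (c : ℕ → ℕ) : ∀ (M t : ℕ), t < off c M → ∃ r, r < M ∧ inBlk c r t := by
  intro M
  induction M with
  | zero => intro t ht; simp [off] at ht
  | succ M ih =>
    intro t ht
    by_cases h : t < off c M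
    · obtain ⟨r, hr, hb⟩ := ih t h
      exact ⟨r, Nat.lt_succ_of_lt hr, hb⟩
    · exact ⟨M, Nat.lt_succ_self M, Nat.le_of_not_lt h, by rwa [off_succ] at ht⟩

lemma sameBlk_symm {s t : ℕ} (h : sameBlk c m s t) : sameBlk c m t s := by
  obtain ⟨r, h1, h2, h3⟩ := h; exact ⟨r, h1, h3, h2⟩

lemma piv_disjoint {i j k l : ℕ}
    (hd : ({i, j} ∩ {k, l} : Set ℕ) = ∅) :
    ∀ t, ¬ (inPiv c i j t ∧ inPiv c k l t) := by
  rintro t ⟨h1, h2⟩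
  have key : ∀ r r', (r = i ∨ r = j) → (r' = k ∨ r' = l) →
      inBlk c r t → inBlk c r' t → False := by
    intro r r' hr hr' hb hb'
    have he : r = r' := blk_unique hb hb'
    have hmem : r ∈ ({i, j} ∩ {k, l} : Set ℕ) := by
      refine ⟨?_, ?_⟩
      · rcases hr with rfl | rfl <;> simp
      · rcases hr' with rfl | rfl <;> simp [he]
    rw [hd] at hmem
    exact hmem
  rcases h1 with h1 | h1 <;> rcases h2 with h2 | h2
  · exact key i k (Or.inl rfl) (Or.inl rfl) h1 h2
  · exact key i l (Or.inl rfl) (Or.inr rfl) h1 h2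
  · exact key j k (Or.inr rfl) (Or.inl rfl) h1 h2
  · exact key j l (Or.inr rfl) (Or.inr rfl) h1 h2

/-- diagonal projection onto the pivot zone -/
def pivP (n : ℕ) (c : ℕ → ℕ) (i j : ℕ) : Matrix (Fin n) (Fin n) ℝ :=
  Matrix.diagonal fun s => if inPiv c i j (s : ℕ) then 1 else 0

lemma nij_eq (i j : ℕ) (X : Matrix (Fin n) (Fin n) ℝ) :
    nij c i j X = X - pivP n c i j * X * pivP n c i j := by
  ext s t
  simp only [nij, pivP, Matrix.sub_apply, Matrix.mul_diagonal, Matrix.diagonal_mul]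
  by_cases hs : inPiv c i j (s : ℕ) <;> by_cases ht : inPiv c i j (t : ℕ) <;>
    simp [hs, ht]

lemma pivP_idem (i j : ℕ) : pivP n c i j * pivP n c i j = pivP n c i j := by
  ext s t
  simp only [pivP, Matrix.diagonal_mul_diagonal, Matrix.diagonal_apply]
  by_cases he : s = t
  · subst he; by_cases h : inPiv c i j (s : ℕ) <;> simp [h]
  · simp [he]

lemma pivP_mul_pivP_of_disj {i j k l : ℕ}
    (hd : ∀ t, ¬ (inPiv c i j t ∧ inPiv c k l t)) :
    pivP n c i j * pivP n c k l = 0 := by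
  rw [pivP, pivP, Matrix.diagonal_mul_diagonal]
  have : (fun s : Fin n => (if inPiv c i j (s:ℕ) then (1:ℝ) else 0) *
      (if inPiv c k l (s:ℕ) then (1:ℝ) else 0)) = fun _ => 0 := by
    funext s
    by_cases h1 : inPiv c i j (s:ℕ) <;> by_cases h2 : inPiv c k l (s:ℕ) <;>
      simp [h1, h2]
    exact absurd ⟨h1, h2⟩ (hd s)
  rw [this, Matrix.diagonal_zero]

lemma IsElem.transposeElem {i j : ℕ} {U : Matrix (Fin n) (Fin n) ℝ}
    (h : IsElem c i j U) : IsElem c i j U.transpose := by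
  intro s t hst
  have h2 := h t s (fun hh => hst ⟨hh.2, hh.1⟩)
  rw [Matrix.transpose_apply, h2]
  by_cases he : s = t
  · subst he; simp
  · rw [if_neg (fun e => he e.symm), if_neg he]

lemma elem_decomp {i j : ℕ} {U : Matrix (Fin n) (Fin n) ℝ} (h : IsElem c i j U) :
    U = pivP n c i j * U * pivP n c i j + (1 - pivP n c i j) := by
  ext s t
  simp only [pivP, Matrix.add_apply, Matrix.sub_apply, Matrix.mul_diagonal,
    Matrix.diagonal_mul, Matrix.one_apply]
  by_cases hs : inPiv c i j (s : ℕ) <;> by_cases ht : inPiv c i j (t : ℕ)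
  · by_cases he : s = t <;> simp [hs, ht, he, Matrix.diagonal_apply]
  · have h2 := h s t (fun hh => ht hh.2)
    rw [h2]
    by_cases he : s = t
    · subst he; exact absurd hs ht
    · simp [hs, ht, he, Matrix.diagonal_apply]
  · have h2 := h s t (fun hh => hs hh.1)
    rw [h2]
    by_cases he : s = t
    · subst he; exact absurd ht hs
    · simp [hs, ht, he, Matrix.diagonal_apply]
  · have h2 := h s t (fun hh => hs hh.1)
    rw [h2]
    by_cases he : s = t
    · subst he; simp [hs, Matrix.diagonal_apply]
    · simp [hs, ht, he, Matrix.diagonal_apply]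

/-- abstract algebraic form of the conjugation-then-annihilate operation -/
lemma ring_aux {R : Type*} [Ring R] (d W U M A A' : R)
    (hW : W = A' + (1 - d)) (hU : U = A + (1 - d))
    (hdA' : d * A' = A') (hAd : A * d = A)
    (hdq : d * (1 - d) = 0) (hqd : (1 - d) * d = 0) :
    W * M * U - d * (W * M * U) * d =
      A' * M * (1 - d) + (1 - d) * M * A + (1 - d) * M * (1 - d) := by
  subst hW; subst hU
  have tA : ∀ Y : R, Y * A * d = Y * A := fun Y => by rw [mul_assoc, hAd]
  have tq : ∀ Y : R, Y * (1 - d) * d = 0 := fun Y => by rw [mul_assoc, hqd, mul_zero]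
  simp only [add_mul, mul_add, ← mul_assoc]
  simp only [hdA', tA, tq, hdq, zero_mul, mul_zero, zero_add, add_zero]
  abel

lemma nij_conj {i j : ℕ} {U : Matrix (Fin n) (Fin n) ℝ} (hU : IsElem c i j U)
    (M : Matrix (Fin n) (Fin n) ℝ) :
    nij c i j (U.transpose * M * U) =
      (pivP n c i j * U.transpose * pivP n c i j) * M * (1 - pivP n c i j) +
      (1 - pivP n c i j) * M * (pivP n c i j * U * pivP n c i j) +
      (1 - pivP n c i j) * M * (1 - pivP n c i j) := by
  have hdd := pivP_idem (n := n) (c := c) i j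
  rw [nij_eq]
  refine ring_aux (pivP n c i j) U.transpose U M _ _
    (elem_decomp hU.transposeElem) (elem_decomp hU) ?_ ?_ ?_ ?_
  · show pivP n c i j * (pivP n c i j * U.transpose * pivP n c i j) = _
    simp only [← mul_assoc]
    rw [hdd]
  · show pivP n c i j * U * pivP n c i j * pivP n c i j = _
    rw [mul_assoc, hdd]
  · rw [mul_sub, mul_one, hdd, sub_self]
  · rw [sub_mul, one_mul, hdd, sub_self]

lemma conj_comm {i j k l : ℕ} {U V : Matrix (Fin n) (Fin n) ℝ}
    (hdisj : ∀ t, ¬ (inPiv c i j t ∧ inPiv c k l t))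
    (hU : IsElem c i j U) (hV : IsElem c k l V)
    (M : Matrix (Fin n) (Fin n) ℝ) :
    nij c i j (U.transpose * nij c k l (V.transpose * M * V) * U) =
      nij c k l (V.transpose * nij c i j (U.transpose * M * U) * V) := by
  rw [nij_conj hV M, nij_conj hU M, nij_conj hU, nij_conj hV]
  set d1 := pivP n c i j with hd1
  set d2 := pivP n c k l with hd2
  have h12 : d1 * d2 = 0 := pivP_mul_pivP_of_disj hdisj
  have h21 : d2 * d1 = 0 := pivP_mul_pivP_of_disj (fun t ht => hdisj t ⟨ht.2, ht.1⟩)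
  have t1 : ∀ Y : Matrix (Fin n) (Fin n) ℝ, Y * d1 * d2 = 0 := fun Y => by
    rw [mul_assoc, h12, mul_zero]
  have t2 : ∀ Y : Matrix (Fin n) (Fin n) ℝ, Y * d2 * d1 = 0 := fun Y => by
    rw [mul_assoc, h21, mul_zero]
  have t3 : ∀ Y : Matrix (Fin n) (Fin n) ℝ, Y * d1 * (1 - d2) = Y * d1 := fun Y => by
    rw [mul_sub, mul_one, t1, sub_zero]
  have t4 : ∀ Y : Matrix (Fin n) (Fin n) ℝ, Y * d2 * (1 - d1) = Y * d2 := fun Y => by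
    rw [mul_sub, mul_one, t2, sub_zero]
  have h5 : (1 - d1) * d2 = d2 := by rw [sub_mul, one_mul, h12, sub_zero]
  have h6 : (1 - d2) * d1 = d1 := by rw [sub_mul, one_mul, h21, sub_zero]
  have t5 : ∀ Y : Matrix (Fin n) (Fin n) ℝ, Y * (1 - d1) * d2 = Y * d2 := fun Y => by
    rw [mul_assoc, h5]
  have t6 : ∀ Y : Matrix (Fin n) (Fin n) ℝ, Y * (1 - d2) * d1 = Y * d1 := fun Y => by
    rw [mul_assoc, h6]
  have h7 : (1 - d1) * (1 - d2) = 1 - d1 - d2 := by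
    rw [mul_sub, mul_one, h5]
  have h8 : (1 - d2) * (1 - d1) = 1 - d1 - d2 := by
    rw [mul_sub, mul_one, h6]; abel
  have t7 : ∀ Y : Matrix (Fin n) (Fin n) ℝ, Y * (1 - d1) * (1 - d2) = Y * (1 - d1 - d2) :=
    fun Y => by rw [mul_assoc, h7]
  have t8 : ∀ Y : Matrix (Fin n) (Fin n) ℝ, Y * (1 - d2) * (1 - d1) = Y * (1 - d1 - d2) :=
    fun Y => by rw [mul_assoc, h8]
  simp only [mul_add, add_mul]
  simp only [← mul_assoc]
  simp only [h12, h21, h5, h6, h7, h8, t1, t2, t3, t4, t5, t6, t7, t8,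
    zero_mul, mul_zero, zero_add, add_zero]
  abel

end AuxProof


section AuxProof2

variable {n m : ℕ} {c : ℕ → ℕ}

lemma symOf_sameBlk (a : OffI n m c → ℝ) {s t : Fin n}
    (h : sameBlk c m (s : ℕ) (t : ℕ)) : symOf a s t = 0 := by
  unfold symOf
  rw [dif_neg (fun hh => hh.2 h), dif_neg (fun hh => hh.2 (sameBlk_symm h))]

lemma elem_apply_basis {k l : ℕ} {V : Matrix (Fin n) (Fin n) ℝ}
    (hV : IsElem c k l V) {t : Fin n} (ht : ¬ inPiv c k l (t : ℕ)) (p : Fin n) :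
    V p t = if p = t then 1 else 0 :=
  hV p t (fun h => ht h.2)

lemma mul_elem_off {k l : ℕ} {V : Matrix (Fin n) (Fin n) ℝ}
    (hV : IsElem c k l V) (M : Matrix (Fin n) (Fin n) ℝ) {t : Fin n}
    (ht : ¬ inPiv c k l (t : ℕ)) (s : Fin n) : (M * V) s t = M s t := by
  rw [Matrix.mul_apply, Finset.sum_eq_single t]
  · rw [elem_apply_basis hV ht, if_pos rfl, mul_one]
  · intro p _ hp; rw [elem_apply_basis hV ht, if_neg hp, mul_zero]
  · intro h; exact absurd (Finset.mem_univ t) h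

lemma elem_mul_off {k l : ℕ} {V : Matrix (Fin n) (Fin n) ℝ}
    (hV : IsElem c k l V) (M : Matrix (Fin n) (Fin n) ℝ) {s : Fin n}
    (hs : ¬ inPiv c k l (s : ℕ)) (t : Fin n) : (V.transpose * M) s t = M s t := by
  rw [Matrix.mul_apply, Finset.sum_eq_single s]
  · rw [Matrix.transpose_apply, elem_apply_basis hV hs, if_pos rfl, one_mul]
  · intro p _ hp
    rw [Matrix.transpose_apply, elem_apply_basis hV hs, if_neg hp, zero_mul]
  · intro h; exact absurd (Finset.mem_univ s) h

lemma conj_elem_off {k l : ℕ} {V : Matrix (Fin n) (Fin n) ℝ}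
    (hV : IsElem c k l V) (M : Matrix (Fin n) (Fin n) ℝ) {s t : Fin n}
    (hs : ¬ inPiv c k l (s : ℕ)) (ht : ¬ inPiv c k l (t : ℕ)) :
    (V.transpose * M * V) s t = M s t := by
  rw [mul_elem_off hV _ ht s, elem_mul_off hV M hs t]

lemma symOf_transpose (a : OffI n m c → ℝ) : (symOf a).transpose = symOf a := by
  ext s t
  rw [Matrix.transpose_apply]
  unfold symOf
  by_cases h : (s : ℕ) < (t : ℕ) ∧ ¬ sameBlk c m (s : ℕ) (t : ℕ)
  · rw [dif_neg (fun hh : (t:ℕ) < (s:ℕ) ∧ _ => by omega), dif_pos h, dif_pos h]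
  · by_cases h' : (t : ℕ) < (s : ℕ) ∧ ¬ sameBlk c m (t : ℕ) (s : ℕ)
    · rw [dif_pos h', dif_neg h, dif_pos h']
    · rw [dif_neg h', dif_neg (fun hh : (s:ℕ) < (t:ℕ) ∧ _ => h hh), dif_neg h, dif_neg h']

lemma nij_transpose (k l : ℕ) (X : Matrix (Fin n) (Fin n) ℝ) :
    (nij c k l X).transpose = nij c k l X.transpose := by
  ext s t
  simp only [nij, Matrix.transpose_apply]
  by_cases h1 : inPiv c k l (s : ℕ) <;> by_cases h2 : inPiv c k l (t : ℕ) <;>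
    simp [h1, h2]

lemma nij_conj_symm {k l : ℕ} {V M : Matrix (Fin n) (Fin n) ℝ}
    (hMsym : M.transpose = M) :
    (nij c k l (V.transpose * M * V)).transpose = nij c k l (V.transpose * M * V) := by
  rw [nij_transpose]
  congr 1
  rw [Matrix.transpose_mul, Matrix.transpose_mul, Matrix.transpose_transpose, hMsym,
    Matrix.mul_assoc]

lemma nij_conj_vanish {k l : ℕ} {V M : Matrix (Fin n) (Fin n) ℝ}
    (hV : IsElem c k l V)
    (hM0 : ∀ s t : Fin n, sameBlk c m (s : ℕ) (t : ℕ) → M s t = 0) :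
    ∀ s t : Fin n, sameBlk c m (s : ℕ) (t : ℕ) → nij c k l (V.transpose * M * V) s t = 0 := by
  intro s t hsb
  obtain ⟨r, hrm, hbs, hbt⟩ := hsb
  by_cases hp : inPiv c k l (s : ℕ) ∧ inPiv c k l (t : ℕ)
  · simp [nij, hp]
  · have same_piv : ∀ {a b : ℕ}, inBlk c r a → inBlk c r b →
        inPiv c k l a → inPiv c k l b := by
      intro a b ha hb hpa
      rcases hpa with h | h
      · exact Or.inl (by rwa [blk_unique ha h] at hb)
      · exact Or.inr (by rwa [blk_unique ha h] at hb)
    have hns : ¬ inPiv c k l (s : ℕ) := fun h => hp ⟨h, same_piv hbs hbt h⟩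
    have hnt : ¬ inPiv c k l (t : ℕ) := fun h => hp ⟨same_piv hbt hbs h, h⟩
    rw [nij, if_neg hp] at *
    rw [conj_elem_off hV M hns hnt]
    exact hM0 s t ⟨r, hrm, hbs, hbt⟩

lemma symOf_vec (hn : off c m = n) {X : Matrix (Fin n) (Fin n) ℝ}
    (hsym : X.transpose = X)
    (h0 : ∀ s t : Fin n, sameBlk c m (s : ℕ) (t : ℕ) → X s t = 0) :
    symOf (fun r : OffI n m c => X r.1.1 r.1.2) = X := by
  ext s t
  unfold symOf
  by_cases h : (s : ℕ) < (t : ℕ) ∧ ¬ sameBlk c m (s : ℕ) (t : ℕ)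
  · rw [dif_pos h]
  · rw [dif_neg h]
    by_cases h' : (t : ℕ) < (s : ℕ) ∧ ¬ sameBlk c m (t : ℕ) (s : ℕ)
    · rw [dif_pos h']
      show X t s = X s t
      rw [← Matrix.transpose_apply X s t, hsym]
    · rw [dif_neg h']
      push_neg at h h'
      rcases Nat.lt_trichotomy (s : ℕ) (t : ℕ) with hlt | heq | hgt
      · exact (h0 s t (h hlt)).symm
      · have he : s = t := Fin.ext heq
        subst he
        obtain ⟨r, hr, hb⟩ := exists_blk c m (s : ℕ) (by rw [hn]; exact s.isLt)
        exact (h0 s s ⟨r, hr, hb, hb⟩).symm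
      · exact (h0 s t (sameBlk_symm (h' hgt))).symm

lemma symOf_sum_single (x : OffI n m c → ℝ) :
    symOf x = ∑ r : OffI n m c, x r • symOf (Pi.single r (1 : ℝ)) := by
  ext s t
  rw [Matrix.sum_apply]
  simp only [Matrix.smul_apply, smul_eq_mul]
  unfold symOf
  by_cases h : (s : ℕ) < (t : ℕ) ∧ ¬ sameBlk c m (s : ℕ) (t : ℕ)
  · simp only [dif_pos h]
    have key : ∀ p : OffI n m c, x p = ∑ r : OffI n m c, x r * (Pi.single r (1 : ℝ) : OffI n m c → ℝ) p := by
      intro p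
      rw [Finset.sum_eq_single p]
      · rw [Pi.single_eq_same, mul_one]
      · intro b _ hb; rw [Pi.single_apply, if_neg (fun e => hb e.symm), mul_zero]
      · intro hh; exact absurd (Finset.mem_univ _) hh
    exact key _
  · rw [dif_neg h]
    by_cases h' : (t : ℕ) < (s : ℕ) ∧ ¬ sameBlk c m (t : ℕ) (s : ℕ)
    · simp only [dif_neg h, dif_pos h']
      have key : ∀ p : OffI n m c, x p = ∑ r : OffI n m c, x r * (Pi.single r (1 : ℝ) : OffI n m c → ℝ) p := by
        intro p
        rw [Finset.sum_eq_single p]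
        · rw [Pi.single_eq_same, mul_one]
        · intro b _ hb; rw [Pi.single_apply, if_neg (fun e => hb e.symm), mul_zero]
        · intro hh; exact absurd (Finset.mem_univ _) hh
      exact key _
    · simp only [dif_neg h, dif_neg h']
      simp

/-- the annihilate-conjugate operation as a linear map -/
def conjNijLM (c : ℕ → ℕ) (i j : ℕ) (U : Matrix (Fin n) (Fin n) ℝ) :
    Matrix (Fin n) (Fin n) ℝ →ₗ[ℝ] Matrix (Fin n) (Fin n) ℝ where
  toFun M := nij c i j (U.transpose * M * U)
  map_add' M N := by
    simp only [nij_eq, mul_add, add_mul]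
    abel
  map_smul' a M := by
    simp only [nij_eq, Matrix.mul_smul, Matrix.smul_mul, smul_sub, RingHom.id_apply]

@[simp] lemma conjNijLM_apply (i j : ℕ) (U M : Matrix (Fin n) (Fin n) ℝ) :
    conjNijLM c i j U M = nij c i j (U.transpose * M * U) := rfl

lemma annih_mul_entry (hn : off c m = n) {i j k l : ℕ}
    {U V : Matrix (Fin n) (Fin n) ℝ}
    (hU : IsElem c i j U) (hV : IsElem c k l V) (p q : OffI n m c) :
    (annih n m c i j U * annih n m c k l V) p q =
      nij c i j (U.transpose *
        nij c k l (V.transpose * symOf (Pi.single q (1 : ℝ)) * V) * U) p.1.1 p.1.2 := by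
  set X := nij c k l (V.transpose * symOf (Pi.single q (1 : ℝ)) * V) with hX
  have hXsym : X.transpose = X := nij_conj_symm (symOf_transpose _)
  have hX0 : ∀ s t : Fin n, sameBlk c m (s : ℕ) (t : ℕ) → X s t = 0 :=
    nij_conj_vanish hV (fun s t hh => symOf_sameBlk _ hh)
  have hfold : symOf (fun r : OffI n m c => X r.1.1 r.1.2) = X := symOf_vec hn hXsym hX0
  set x : OffI n m c → ℝ := fun r => X r.1.1 r.1.2 with hxdef
  have lin : nij c i j (U.transpose * symOf x * U) =
      ∑ r : OffI n m c, x r • nij c i j (U.transpose * symOf (Pi.single r (1 : ℝ)) * U) := by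
    rw [symOf_sum_single x]
    have h1 := map_sum (conjNijLM c i j U)
      (fun r : OffI n m c => x r • symOf (Pi.single r (1 : ℝ))) Finset.univ
    simp only [conjNijLM_apply, map_smul] at h1
    simpa using h1
  calc (annih n m c i j U * annih n m c k l V) p q
      = ∑ r : OffI n m c,
          x r • nij c i j (U.transpose * symOf (Pi.single r (1 : ℝ)) * U) p.1.1 p.1.2 := by
        rw [Matrix.mul_apply]
        refine Finset.sum_congr rfl (fun r _ => ?_)
        rw [smul_eq_mul, mul_comm]
        rfl
    _ = (∑ r : OffI n m c,
          x r • nij c i j (U.transpose * symOf (Pi.single r (1 : ℝ)) * U)) p.1.1 p.1.2 := by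
        rw [Matrix.sum_apply]
        simp [Matrix.smul_apply]
    _ = nij c i j (U.transpose * symOf x * U) p.1.1 p.1.2 := by rw [lin]
    _ = _ := by rw [hfold]

lemma annih_comm (hn : off c m = n) {i j k l : ℕ}
    {U V : Matrix (Fin n) (Fin n) ℝ}
    (hdisj : ∀ t, ¬ (inPiv c i j t ∧ inPiv c k l t))
    (hU : IsElem c i j U) (hV : IsElem c k l V) :
    annih n m c i j U * annih n m c k l V = annih n m c k l V * annih n m c i j U := by
  ext p q
  rw [annih_mul_entry hn hU hV p q,
    annih_mul_entry hn hV hU p q,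
    conj_comm hdisj hU hV (symOf (Pi.single q (1 : ℝ)))]

end AuxProof2


section AuxProof3

lemma specRad_mul_comm {ι : Type*} [Fintype ι] [DecidableEq ι] (A B : Matrix ι ι ℝ) :
    specRad (A * B) = specRad (B * A) := by
  have hmap : ∀ (M N : Matrix ι ι ℝ),
      ((M * N).map (fun r : ℝ => (r : ℂ))) =
        M.map (fun r : ℝ => (r : ℂ)) * N.map (fun r : ℝ => (r : ℂ)) := by
    intro M N
    exact Matrix.map_mul (f := Complex.ofRealHom)
  have key : ∀ (A B : Matrix ι ι ℝ),
      {v : ℝ | ∃ (μ : ℂ) (x : ι → ℂ), x ≠ 0 ∧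
        ((A * B).map (fun r : ℝ => (r : ℂ))).mulVec x = μ • x ∧ v = ‖μ‖} ⊆
      {v : ℝ | ∃ (μ : ℂ) (x : ι → ℂ), x ≠ 0 ∧
        ((B * A).map (fun r : ℝ => (r : ℂ))).mulVec x = μ • x ∧ v = ‖μ‖} := by
    intro A B v hv
    obtain ⟨μ, x, hx, heig, hveq⟩ := hv
    set A' := A.map (fun r : ℝ => (r : ℂ)) with hA'
    set B' := B.map (fun r : ℝ => (r : ℂ)) with hB'
    rw [hmap] at heig
    by_cases hμ : μ = 0
    · subst hμ
      rw [zero_smul] at heig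
      have hdet : (A' * B').det = 0 := Matrix.exists_mulVec_eq_zero_iff.mp ⟨x, hx, heig⟩
      have hdet' : (B' * A').det = 0 := by
        rw [Matrix.det_mul, mul_comm, ← Matrix.det_mul]
        exact hdet
      obtain ⟨y, hy, hy0⟩ := Matrix.exists_mulVec_eq_zero_iff.mpr hdet'
      refine ⟨0, y, hy, ?_, hveq⟩
      rw [hmap, zero_smul]
      exact hy0
    · refine ⟨μ, B'.mulVec x, ?_, ?_, hveq⟩
      · intro hzero
        have h1 : (A' * B').mulVec x = A'.mulVec (B'.mulVec x) :=
          (Matrix.mulVec_mulVec x A' B').symm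
        rw [h1, hzero, Matrix.mulVec_zero] at heig
        rcases smul_eq_zero.mp heig.symm with h | h
        exacts [hμ h, hx h]
      · rw [hmap, ← Matrix.mulVec_mulVec, Matrix.mulVec_mulVec x A' B', heig,
          Matrix.mulVec_smul]
  exact congrArg sSup (Set.Subset.antisymm (key A B) (key B A))

variable {n m : ℕ} {c : ℕ → ℕ}

lemma prodD_cons (e : (ℕ × ℕ) × Matrix (OffI n m c) (OffI n m c) ℝ)
    (L : List ((ℕ × ℕ) × Matrix (OffI n m c) (OffI n m c) ℝ)) :
    prodD (e :: L) = prodD L * e.2 := by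
  simp [prodD, List.prod_append]

lemma prodD_append (X Y : List ((ℕ × ℕ) × Matrix (OffI n m c) (OffI n m c) ℝ)) :
    prodD (X ++ Y) = prodD Y * prodD X := by
  simp [prodD, List.reverse_append, List.prod_append]

lemma prodD_swap {a b : (ℕ × ℕ) × Matrix (OffI n m c) (OffI n m c) ℝ}
    (l₁ l₂ : List ((ℕ × ℕ) × Matrix (OffI n m c) (OffI n m c) ℝ))
    (h : a.2 * b.2 = b.2 * a.2) :
    prodD (l₁ ++ a :: b :: l₂) = prodD (l₁ ++ b :: a :: l₂) := by
  rw [prodD_append, prodD_append, prodD_cons, prodD_cons, prodD_cons, prodD_cons]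
  conv_lhs => rw [mul_assoc (prodD l₂) b.2 a.2]
  conv_rhs => rw [mul_assoc (prodD l₂) a.2 b.2, h]

lemma swap_step (hn : off c m = n)
    {L L' : List ((ℕ × ℕ) × Matrix (OffI n m c) (OffI n m c) ℝ)}
    (hmem : ∀ e ∈ L, e.2 ∈ Iij n m c e.1.1 e.1.2)
    (h : AdjSwapG Prod.fst L L') :
    (∀ e ∈ L', e.2 ∈ Iij n m c e.1.1 e.1.2) ∧ prodD L = prodD L' := by
  obtain ⟨l₁, l₂, a, b, hdisj, rfl, rfl⟩ := h
  constructor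
  · intro e he
    apply hmem
    simp only [List.mem_append, List.mem_cons] at he ⊢
    tauto
  · obtain ⟨Ua, hUa, _, ha2⟩ := hmem a (by simp)
    obtain ⟨Ub, hUb, _, hb2⟩ := hmem b (by simp)
    apply prodD_swap
    rw [ha2, hb2]
    exact annih_comm hn (piv_disjoint hdisj) hUa hUb

lemma equiv_invariant (hn : off c m = n)
    {L L' : List ((ℕ × ℕ) × Matrix (OffI n m c) (OffI n m c) ℝ)}
    (h : EquivG Prod.fst L L')
    (hmem : ∀ e ∈ L, e.2 ∈ Iij n m c e.1.1 e.1.2) :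
    (∀ e ∈ L', e.2 ∈ Iij n m c e.1.1 e.1.2) ∧ prodD L = prodD L' := by
  induction h with
  | refl => exact ⟨hmem, rfl⟩
  | tail h1 h2 ih =>
    obtain ⟨ihm, ihp⟩ := ih
    obtain ⟨hm2, hp2⟩ := swap_step hn ihm h2
    exact ⟨hm2, ihp.trans hp2⟩

lemma shift_invariant
    {L L' : List ((ℕ × ℕ) × Matrix (OffI n m c) (OffI n m c) ℝ)}
    (h : ShiftG L L')
    (hmem : ∀ e ∈ L, e.2 ∈ Iij n m c e.1.1 e.1.2) :
    (∀ e ∈ L', e.2 ∈ Iij n m c e.1.1 e.1.2) ∧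
      specRad (prodD L) = specRad (prodD L') := by
  obtain ⟨l₁, l₂, rfl, rfl⟩ := h
  constructor
  · intro e he
    apply hmem
    simp only [List.mem_append] at he ⊢
    tauto
  · rw [prodD_append, prodD_append]
    exact specRad_mul_comm (prodD l₂) (prodD l₁)

end AuxProof3

/-- Lemma 2.15: let `L` be a pivot ordering decorated with block Jacobi
annihilators (each annihilator belonging to the class of its pair), `L'` a rearrangement
of the same decorated list obtained by a weak-equivalence chain. Then the spectral radii
of the corresponding block Jacobi operators agree; and if the rearrangement uses only
admissible transpositions, the operators themselves coincide. -/
theorem statement16 (n m : ℕ) (c : ℕ → ℕ) (hpart : IsPartition n m c)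
    (L L' : List ((ℕ × ℕ) × Matrix (OffI n m c) (OffI n m c) ℝ))
    (hseq : SeqOn m (L.map Prod.fst))
    (hmem : ∀ e ∈ L, e.2 ∈ Iij n m c e.1.1 e.1.2) :
    (WeakG Prod.fst L L' → specRad (prodD L) = specRad (prodD L')) ∧
    (EquivG Prod.fst L L' → prodD L = prodD L') := by
  have hn : off c m = n := hpart.2.2
  constructor
  · intro hweak
    have main : ∀ M' : List ((ℕ × ℕ) × Matrix (OffI n m c) (OffI n m c) ℝ),
        WeakG Prod.fst L M' →
        (∀ e ∈ M', e.2 ∈ Iij n m c e.1.1 e.1.2) ∧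
          specRad (prodD L) = specRad (prodD M') := by
      intro M' h
      induction h with
      | refl => exact ⟨hmem, rfl⟩
      | tail h1 h2 ih =>
        obtain ⟨ihm, ihp⟩ := ih
        rcases h2 with heq | hsh
        · obtain ⟨hm2, hp2⟩ := equiv_invariant hn heq ihm
          exact ⟨hm2, ihp.trans (by rw [hp2])⟩
        · obtain ⟨hm2, hp2⟩ := shift_invariant hsh ihm
          exact ⟨hm2, ihp.trans hp2⟩
    exact (main L' hweak).2
  · intro heq
    exact (equiv_invariant hn heq hmem).2
end
end BlockJacobi
end
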